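/- Let Ĝ be a global minimizer of L₂ over ℝ^p and fix an index j with x_j ≠ 0. Suppose that every group g ∈ 𝒢 containing j satisfies ‖Ĝ_g‖₂ > 0 (the paper states this condition equivalently as √(Σ_{j'∈g} ((|S_{j'}'(Ĝ)|/n − λ₂ u_{j'})₊)²) > λ_g v_g for every such group). Then γ̂_j = sgn(S_j'(Ĝ)) · (|S_j'(Ĝ)| − n λ₂ u_j)₊ / ( ‖x_j‖₂² + n · Σ_{g ∈ 𝒢 : j ∈ g} λ_g v_g / ‖Ĝ_g‖₂ ). -/

import Mathlib

open Finset

theorem sgl_scalar_key {ι : Type} (F : Finset ι) (a s b : ℝ) (w c : ι → ℝ)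
    (ha : 0 < a) (hb : 0 ≤ b) (hw : ∀ g ∈ F, 0 ≤ w g)
    (t₀ : ℝ) (hpos : ∀ g ∈ F, 0 < t₀ ^ 2 + c g)
    (hmin : ∀ t, a / 2 * t₀ ^ 2 - s * t₀ + b * |t₀|
          + ∑ g ∈ F, w g * Real.sqrt (t₀ ^ 2 + c g)
        ≤ a / 2 * t ^ 2 - s * t + b * |t|
          + ∑ g ∈ F, w g * Real.sqrt (t ^ 2 + c g)) :
    t₀ = Real.sign s * max (|s| - b) 0
        / (a + ∑ g ∈ F, w g / Real.sqrt (t₀ ^ 2 + c g)) := by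
  have hDpos : 0 < a + ∑ g ∈ F, w g / Real.sqrt (t₀ ^ 2 + c g) := by
    have : 0 ≤ ∑ g ∈ F, w g / Real.sqrt (t₀ ^ 2 + c g) :=
      Finset.sum_nonneg fun g hg => div_nonneg (hw g hg) (Real.sqrt_nonneg _)
    linarith
  rcases eq_or_ne t₀ 0 with ht0 | ht0
  · -- case t₀ = 0 : show |s| ≤ b
    have hcg : ∀ g ∈ F, 0 < c g := by
      intro g hg; have := hpos g hg; rw [ht0] at this; simpa using this
    have hsq : ∀ g ∈ F, ∀ t : ℝ, Real.sqrt (t ^ 2 + c g)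
        ≤ Real.sqrt (c g) + t ^ 2 / (2 * Real.sqrt (c g)) := by
      intro g hg t
      have hc := hcg g hg
      have hsc : 0 < Real.sqrt (c g) := Real.sqrt_pos.2 hc
      have hcs : Real.sqrt (c g) ^ 2 = c g := Real.sq_sqrt hc.le
      have hR : (0:ℝ) ≤ Real.sqrt (c g) + t ^ 2 / (2 * Real.sqrt (c g)) := by positivity
      have hle : t ^ 2 + c g ≤ (Real.sqrt (c g) + t ^ 2 / (2 * Real.sqrt (c g))) ^ 2 := by
        have he : Real.sqrt (c g) * (t ^ 2 / (2 * Real.sqrt (c g))) = t ^ 2 / 2 := by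
          field_simp
        nlinarith [sq_nonneg (t ^ 2 / (2 * Real.sqrt (c g))), hcs, he]
      calc Real.sqrt (t ^ 2 + c g) ≤ Real.sqrt ((Real.sqrt (c g) + t ^ 2 / (2 * Real.sqrt (c g))) ^ 2) :=
            Real.sqrt_le_sqrt hle
        _ = _ := Real.sqrt_sq hR
    -- key inequality: 0 ≤ (a/2 + C) t² - s t + b |t| for all t
    set C := ∑ g ∈ F, w g / (2 * Real.sqrt (c g)) with hCdef
    have hC : 0 ≤ C :=
      Finset.sum_nonneg fun g hg => div_nonneg (hw g hg) (by positivity)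
    have hkey : ∀ t : ℝ, 0 ≤ (a / 2 + C) * t ^ 2 - s * t + b * |t| := by
      intro t
      have h1 := hmin t
      rw [ht0] at h1
      simp only [abs_zero, mul_zero] at h1
      have h2 : ∑ g ∈ F, w g * Real.sqrt (t ^ 2 + c g)
          ≤ ∑ g ∈ F, w g * (Real.sqrt (c g) + t ^ 2 / (2 * Real.sqrt (c g))) :=
        Finset.sum_le_sum fun g hg => mul_le_mul_of_nonneg_left (hsq g hg t) (hw g hg)
      have h3 : ∑ g ∈ F, w g * (Real.sqrt (c g) + t ^ 2 / (2 * Real.sqrt (c g)))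
          = ∑ g ∈ F, w g * Real.sqrt (c g) + C * t ^ 2 := by
        rw [hCdef, Finset.sum_mul]
        rw [← Finset.sum_add_distrib]
        apply Finset.sum_congr rfl
        intro g hg; ring
      have h4 : ∑ g ∈ F, w g * Real.sqrt (0 ^ 2 + c g) = ∑ g ∈ F, w g * Real.sqrt (c g) := by
        apply Finset.sum_congr rfl; intro g hg; norm_num
      rw [h4] at h1
      nlinarith [h1, h2, h3]
    have hsb : |s| ≤ b := by
      rcases abs_cases s with ⟨hs1, hs2⟩ | ⟨hs1, hs2⟩
      · -- s ≥ 0, need s ≤ b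
        rw [hs1]
        by_contra hlt
        push_neg at hlt
        have hK : 0 < a / 2 + C := by linarith
        set t := (s - b) / (2 * (a / 2 + C)) with htdef
        have htpos : 0 < t := div_pos (by linarith) (by linarith)
        have hthis := hkey t
        rw [abs_of_pos htpos] at hthis
        have h5 : (a / 2 + C) * t = (s - b) / 2 := by
          rw [htdef]; field_simp
        have h6 : (a / 2 + C) * t ^ 2 = (s - b) / 2 * t := by
          rw [sq, ← mul_assoc, h5]
        have h7 : 0 < (s - b) * t := mul_pos (by linarith) htpos
        linarith
      · rw [hs1]
        by_contra hlt
        push_neg at hlt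
        have hK : 0 < a / 2 + C := by linarith
        set t := (s + b) / (2 * (a / 2 + C)) with htdef
        have htneg : t < 0 := div_neg_of_neg_of_pos (by linarith) (by linarith)
        have hthis := hkey t
        rw [abs_of_neg htneg] at hthis
        have h5 : (a / 2 + C) * t = (s + b) / 2 := by
          rw [htdef]; field_simp
        have h6 : (a / 2 + C) * t ^ 2 = (s + b) / 2 * t := by
          rw [sq, ← mul_assoc, h5]
        have h7 : 0 < (s + b) * t := mul_pos_of_neg_of_neg (by linarith) htneg
        linarith
    rw [ht0]
    rw [max_eq_right (by linarith)]
    simp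
  · -- case t₀ ≠ 0 : derivative
    have hloc : IsLocalMin (fun t => a / 2 * t ^ 2 - s * t + b * |t|
        + ∑ g ∈ F, w g * Real.sqrt (t ^ 2 + c g)) t₀ :=
      Filter.Eventually.of_forall hmin
    have hderiv : HasDerivAt (fun t => a / 2 * t ^ 2 - s * t + b * |t|
        + ∑ g ∈ F, w g * Real.sqrt (t ^ 2 + c g))
        (a * t₀ - s + b * Real.sign t₀
          + ∑ g ∈ F, w g * (t₀ / Real.sqrt (t₀ ^ 2 + c g))) t₀ := by
      have h1 : HasDerivAt (fun t : ℝ => a / 2 * t ^ 2) (a * t₀) t₀ := by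
        have := (hasDerivAt_pow 2 t₀).const_mul (a / 2)
        exact this.congr_deriv (by push_cast; ring)
      have h2 : HasDerivAt (fun t : ℝ => s * t) s t₀ := by
        simpa using (hasDerivAt_id t₀).const_mul s
      have h3 : HasDerivAt (fun t : ℝ => b * |t|) (b * Real.sign t₀) t₀ := by
        have habs := hasDerivAt_abs ht0
        have := habs.const_mul b
        refine this.congr_deriv ?_
        rcases lt_or_gt_of_ne ht0 with h | h
        · rw [Real.sign_of_neg h]; simp [h]
        · rw [Real.sign_of_pos h]; simp [h]
      have h4 : HasDerivAt (fun t : ℝ => ∑ g ∈ F, w g * Real.sqrt (t ^ 2 + c g))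
          (∑ g ∈ F, w g * (t₀ / Real.sqrt (t₀ ^ 2 + c g))) t₀ := by
        apply HasDerivAt.fun_sum
        intro g hg
        have hpg := hpos g hg
        have hinner : HasDerivAt (fun t : ℝ => t ^ 2 + c g) (2 * t₀) t₀ := by
          simpa using (hasDerivAt_pow 2 t₀).add_const (c g)
        have hsqrt : HasDerivAt (fun t : ℝ => Real.sqrt (t ^ 2 + c g))
            (1 / (2 * Real.sqrt (t₀ ^ 2 + c g)) * (2 * t₀)) t₀ :=
          (Real.hasDerivAt_sqrt hpg.ne').comp t₀ hinner
        have := hsqrt.const_mul (w g)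
        refine this.congr_deriv ?_
        have hs0 : Real.sqrt (t₀ ^ 2 + c g) ≠ 0 := (Real.sqrt_pos.2 hpg).ne'
        field_simp
      exact ((h1.sub h2).add h3).add h4
    have hzero := hloc.hasDerivAt_eq_zero hderiv
    set D := a + ∑ g ∈ F, w g / Real.sqrt (t₀ ^ 2 + c g) with hDdef
    have hsum : ∑ g ∈ F, w g * (t₀ / Real.sqrt (t₀ ^ 2 + c g))
        = t₀ * ∑ g ∈ F, w g / Real.sqrt (t₀ ^ 2 + c g) := by
      rw [Finset.mul_sum]; apply Finset.sum_congr rfl; intro g hg; ring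
    rw [hsum] at hzero
    have hDt : t₀ * D = s - b * Real.sign t₀ := by rw [hDdef]; linear_combination hzero
    rcases lt_or_gt_of_ne ht0 with ht | ht
    · -- t₀ < 0
      have hsgn : Real.sign t₀ = -1 := Real.sign_of_neg ht
      rw [hsgn] at hDt
      have hsneg : s < 0 := by nlinarith [mul_neg_of_neg_of_pos ht hDpos]
      rw [Real.sign_of_neg hsneg, abs_of_neg hsneg]
      have hmax : max (-s - b) 0 = -s - b := max_eq_left (by nlinarith)
      rw [hmax]
      rw [eq_div_iff hDpos.ne']
      linear_combination hDt
    · have hsgn : Real.sign t₀ = 1 := Real.sign_of_pos ht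
      rw [hsgn] at hDt
      have hspos : 0 < s := by nlinarith [mul_pos ht hDpos]
      rw [Real.sign_of_pos hspos, abs_of_pos hspos]
      have hmax : max (s - b) 0 = s - b := max_eq_left (by nlinarith)
      rw [hmax]
      rw [eq_div_iff hDpos.ne']
      linear_combination hDt

/-- closed-form expression for a nonzero coordinate of a global
minimizer of the weighted sparse group lasso objective L₂ (Model 2),
when every group containing the index `j` has positive norm. -/
theorem jointModel_gamma_hat_formula
    (n p : ℕ) (hn : 0 < n) (hp : 0 < p)
    (X : Matrix (Fin n) (Fin p) ℝ) (Z : Fin n → ℝ)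
    (lam2 : ℝ) (hlam2 : 0 ≤ lam2)
    (u : Fin p → ℝ) (hu : ∀ j, 0 ≤ u j)
    (𝒢 : Finset (Finset (Fin p)))
    (lamg vg : Finset (Fin p) → ℝ)
    (hlamg : ∀ g ∈ 𝒢, 0 ≤ lamg g) (hvg : ∀ g ∈ 𝒢, 0 ≤ vg g)
    (L2 : (Fin p → ℝ) → ℝ)
    (hL2 : ∀ G, L2 G =
      (1 / (2 * (n : ℝ))) * ∑ i, (Z i - ∑ j, X i j * G j) ^ 2
      + ∑ j, lam2 * u j * |G j|
      + ∑ g ∈ 𝒢, lamg g * vg g * Real.sqrt (∑ j ∈ g, (G j) ^ 2))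
    (S' : (Fin p → ℝ) → Fin p → ℝ)
    (hS' : ∀ G j, S' G j =
      ∑ i, X i j * (Z i - ∑ j', (if j' = j then 0 else X i j' * G j')))
    (Ghat : Fin p → ℝ)
    (hmin : ∀ G, L2 Ghat ≤ L2 G)
    (j : Fin p)
    (hx : (fun i => X i j) ≠ 0)
    (hgroups : ∀ g ∈ 𝒢, j ∈ g → 0 < Real.sqrt (∑ j' ∈ g, (Ghat j') ^ 2)) :
    Ghat j =
      Real.sign (S' Ghat j) * max (|S' Ghat j| - (n : ℝ) * lam2 * u j) 0
      / ((∑ i, (X i j) ^ 2)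
        + (n : ℝ) * ∑ g ∈ 𝒢.filter (fun g => j ∈ g),
            lamg g * vg g / Real.sqrt (∑ j' ∈ g, (Ghat j') ^ 2)) := by
  have hn' : (0:ℝ) < (n:ℝ) := Nat.cast_pos.2 hn
  set A : ℝ := ∑ i, (X i j) ^ 2 with hAdef
  set F : Finset (Finset (Fin p)) := 𝒢.filter (fun g => j ∈ g) with hFdef
  set c : Finset (Fin p) → ℝ := fun g => ∑ j' ∈ g, (if j' = j then 0 else (Ghat j') ^ 2)
    with hcdef
  set r : Fin n → ℝ := fun i => Z i - ∑ j', (if j' = j then 0 else X i j' * Ghat j')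
    with hrdef
  set S : ℝ := S' Ghat j with hSdef
  set t₀ : ℝ := Ghat j with ht₀def
  -- positivity of A
  have hA : 0 < A := by
    obtain ⟨i, hi⟩ := Function.ne_iff.1 hx
    refine Finset.sum_pos' (fun i _ => sq_nonneg _) ⟨i, Finset.mem_univ i, ?_⟩
    exact sq_pos_of_ne_zero hi
  -- S = ∑ i, X i j * r i
  have hSr : S = ∑ i, X i j * r i := by rw [hSdef, hS' Ghat j]
  -- c identity : for g containing j
  have hcg : ∀ g ∈ F, t₀ ^ 2 + c g = ∑ j' ∈ g, (Ghat j') ^ 2 := by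
    intro g hgF
    obtain ⟨hg𝒢, hjg⟩ := Finset.mem_filter.1 hgF
    have : ∀ j' ∈ g, (Ghat j') ^ 2
        = (if j' = j then (Ghat j) ^ 2 else 0) + (if j' = j then 0 else (Ghat j') ^ 2) := by
      intro j' _
      split_ifs with h
      · rw [h]; ring
      · ring
    rw [Finset.sum_congr rfl this, Finset.sum_add_distrib, Finset.sum_ite_eq', if_pos hjg]
  have hpos : ∀ g ∈ F, 0 < t₀ ^ 2 + c g := by
    intro g hgF
    obtain ⟨hg𝒢, hjg⟩ := Finset.mem_filter.1 hgF
    rw [hcg g hgF]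
    have := hgroups g hg𝒢 hjg
    have h2 : 0 ≤ ∑ j' ∈ g, (Ghat j') ^ 2 := Finset.sum_nonneg fun _ _ => sq_nonneg _
    rcases h2.lt_or_eq with h | h
    · exact h
    · exfalso; rw [← h, Real.sqrt_zero] at this; exact lt_irrefl 0 this
  -- explicit form of L2 after update
  have hupd : ∀ (t : ℝ) (i : Fin n),
      Z i - ∑ j', X i j' * Function.update Ghat j t j' = r i - X i j * t := by
    intro t i
    have h1 : ∀ j', X i j' * Function.update Ghat j t j'
        = (if j' = j then X i j' * t else 0) + (if j' = j then 0 else X i j' * Ghat j') := by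
      intro j'
      rw [Function.update_apply]
      split_ifs <;> ring
    rw [Finset.sum_congr rfl (fun j' _ => h1 j')]
    simp only [Finset.sum_add_distrib, Finset.sum_ite_eq', Finset.mem_univ, if_true]
    rw [hrdef]
    ring
  have habs : ∀ t : ℝ, ∑ j', lam2 * u j' * |Function.update Ghat j t j'|
      = lam2 * u j * |t|
        + ∑ j', (if j' = j then 0 else lam2 * u j' * |Ghat j'|) := by
    intro t
    have h1 : ∀ j' ∈ Finset.univ, lam2 * u j' * |Function.update Ghat j t j'|
        = (if j' = j then lam2 * u j' * |t| else 0)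
          + (if j' = j then 0 else lam2 * u j' * |Ghat j'|) := by
      intro j' _
      rw [Function.update_apply]
      split_ifs <;> ring
    rw [Finset.sum_congr rfl h1, Finset.sum_add_distrib, Finset.sum_ite_eq',
      if_pos (Finset.mem_univ j)]
  have hgrp_in : ∀ (t : ℝ), ∀ g ∈ F, ∑ j' ∈ g, (Function.update Ghat j t j') ^ 2
      = t ^ 2 + c g := by
    intro t g hgF
    obtain ⟨hg𝒢, hjg⟩ := Finset.mem_filter.1 hgF
    have h1 : ∀ j' ∈ g, (Function.update Ghat j t j') ^ 2
        = (if j' = j then t ^ 2 else 0) + (if j' = j then 0 else (Ghat j') ^ 2) := by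
      intro j' _
      rw [Function.update_apply]
      split_ifs <;> ring
    rw [Finset.sum_congr rfl h1, Finset.sum_add_distrib, Finset.sum_ite_eq', if_pos hjg]
  have hgrp_out : ∀ (t : ℝ), ∀ g ∈ 𝒢.filter (fun g => ¬ j ∈ g),
      ∑ j' ∈ g, (Function.update Ghat j t j') ^ 2 = ∑ j' ∈ g, (Ghat j') ^ 2 := by
    intro t g hgF
    obtain ⟨hg𝒢, hjg⟩ := Finset.mem_filter.1 hgF
    apply Finset.sum_congr rfl
    intro j' hj'
    rw [Function.update_apply, if_neg (by rintro rfl; exact hjg hj')]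
  -- the scalar objective
  set ψ : ℝ → ℝ := fun t => A / 2 * t ^ 2 - S * t + ((n : ℝ) * lam2 * u j) * |t|
      + ∑ g ∈ F, ((n : ℝ) * (lamg g * vg g)) * Real.sqrt (t ^ 2 + c g) with hψdef
  -- main algebraic identity
  have hkey : ∀ t : ℝ, (n : ℝ) * L2 (Function.update Ghat j t)
      = ψ t + ((1 / 2) * ∑ i, (r i) ^ 2
          + (n : ℝ) * ∑ j', (if j' = j then 0 else lam2 * u j' * |Ghat j'|)
          + (n : ℝ) * ∑ g ∈ 𝒢.filter (fun g => ¬ j ∈ g),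
              lamg g * vg g * Real.sqrt (∑ j' ∈ g, (Ghat j') ^ 2)) := by
    intro t
    rw [hL2]
    have e1 : ∑ i, (Z i - ∑ j', X i j' * Function.update Ghat j t j') ^ 2
        = ∑ i, (r i) ^ 2 - 2 * S * t + A * t ^ 2 := by
      rw [Finset.sum_congr rfl (fun i _ => by rw [hupd t i])]
      have : ∀ i ∈ Finset.univ, (r i - X i j * t) ^ 2
          = (r i) ^ 2 - 2 * (X i j * r i) * t + (X i j) ^ 2 * t ^ 2 := by
        intro i _; ring
      rw [Finset.sum_congr rfl this]
      rw [Finset.sum_add_distrib, Finset.sum_sub_distrib, hSr, hAdef,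
        ← Finset.sum_mul, ← Finset.sum_mul, ← Finset.mul_sum]
    have e3 : ∑ g ∈ 𝒢, lamg g * vg g * Real.sqrt (∑ j' ∈ g, (Function.update Ghat j t j') ^ 2)
        = ∑ g ∈ F, lamg g * vg g * Real.sqrt (t ^ 2 + c g)
          + ∑ g ∈ 𝒢.filter (fun g => ¬ j ∈ g),
              lamg g * vg g * Real.sqrt (∑ j' ∈ g, (Ghat j') ^ 2) := by
      rw [← Finset.sum_filter_add_sum_filter_not 𝒢 (fun g => j ∈ g)]
      congr 1
      · exact Finset.sum_congr rfl fun g hg => by rw [hgrp_in t g hg]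
      · exact Finset.sum_congr rfl fun g hg => by rw [hgrp_out t g hg]
    rw [e1, habs t, e3, hψdef]
    have e4 : ∑ g ∈ F, ((n : ℝ) * (lamg g * vg g)) * Real.sqrt (t ^ 2 + c g)
        = (n : ℝ) * ∑ g ∈ F, lamg g * vg g * Real.sqrt (t ^ 2 + c g) := by
      rw [Finset.mul_sum]
      exact Finset.sum_congr rfl fun g hg => by ring
    simp only [e4]
    field_simp
    ring
  -- the scalar minimization
  have hψmin : ∀ t, ψ t₀ ≤ ψ t := by
    intro t
    have h1 := hmin (Function.update Ghat j t)
    have h2 : L2 Ghat = L2 (Function.update Ghat j t₀) := by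
      rw [ht₀def, Function.update_eq_self]
    rw [h2] at h1
    have h3 := hkey t
    have h4 := hkey t₀
    have h5 := mul_le_mul_of_nonneg_left h1 hn'.le
    rw [h3, h4] at h5
    exact le_of_add_le_add_right h5
  -- apply the scalar lemma
  have hb : (0:ℝ) ≤ (n : ℝ) * lam2 * u j :=
    mul_nonneg (mul_nonneg hn'.le hlam2) (hu j)
  have hw : ∀ g ∈ F, (0:ℝ) ≤ (n : ℝ) * (lamg g * vg g) := by
    intro g hgF
    obtain ⟨hg𝒢, _⟩ := Finset.mem_filter.1 hgF
    exact mul_nonneg hn'.le (mul_nonneg (hlamg g hg𝒢) (hvg g hg𝒢))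
  have hmain := sgl_scalar_key F A S ((n : ℝ) * lam2 * u j)
    (fun g => (n : ℝ) * (lamg g * vg g)) c hA hb hw t₀ hpos hψmin
  have hden : ∑ g ∈ F, ((n : ℝ) * (lamg g * vg g)) / Real.sqrt (t₀ ^ 2 + c g)
      = (n : ℝ) * ∑ g ∈ F, lamg g * vg g / Real.sqrt (∑ j' ∈ g, (Ghat j') ^ 2) := by
    rw [Finset.mul_sum]
    refine Finset.sum_congr rfl fun g hg => ?_
    rw [hcg g hg]
    ring
  rw [hmain, hden]
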